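/- Let R be an integral domain, G a finite group, and M a left R[G]-module which is finitely generated and projective as an R-module. If M is projective as an R[G]-module, then M^G = σ•M; that is, every G-invariant element of M equals σ•m for some m ∈ M, and conversely σ•m is G-invariant for every m ∈ M. -/

import Mathlib

open MonoidAlgebra Finsupp

/-- key smul lemma: single g 1 acts as ρ g on `ρ.asModule`. -/
lemma single_smul_asModule {R : Type*} [CommRing R] {G : Type*} [Group G]
    {M : Type*} [AddCommGroup M] [Module R M] (ρ : Representation R G M)
    (g : G) (x : ρ.asModule) :
    (MonoidAlgebra.single g (1 : R)) • x = (ρ g (ρ.asModuleEquiv x) : M) := by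
  show ρ.asAlgebraHom (MonoidAlgebra.single g (1 : R)) x = _
  simp [Representation.asAlgebraHom_single]
  rfl

/-- For an integral domain `R`, a finite group `G`, and a left `R[G]`-module `M`
(finitely generated and projective over `R`) which is projective as an `R[G]`-module,
the invariants `M^G` coincide with `σ • M` where `σ = ∑ g ∈ G, g`. -/
theorem invariants_eq_range_sigma_smul
    {R : Type*} [CommRing R] [IsDomain R]
    {G : Type*} [Group G] [Fintype G]
    {M : Type*} [AddCommGroup M] [Module R M]
    (ρ : Representation R G M)
    (hfin : Module.Finite R M) (hprojR : Module.Projective R M)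
    (hprojRG : Module.Projective (MonoidAlgebra R G) ρ.asModule) :
    (ρ.invariants : Set M) = Set.range (fun m : M => ∑ g : G, ρ g m) := by
  classical
  ext m
  simp only [SetLike.mem_coe, Set.mem_range]
  constructor
  · intro hm
    have hm' : ∀ g : G, ρ g m = m := hm
    obtain ⟨s, hs⟩ := hprojRG.out
    set σ : MonoidAlgebra R G := ∑ g : G, MonoidAlgebra.single g (1 : R) with hσ
    let m' : ρ.asModule := m
    -- s m' is invariant under left mult by every g
    have hsm : ∀ g : G, (MonoidAlgebra.single g (1 : R)) • s m' = s m' := by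
      intro g
      rw [← map_smul]
      congr 1
      have := single_smul_asModule ρ g m'
      rw [this]
      show (ρ g m : ρ.asModule) = m'
      rw [hm' g]
    -- hence each coefficient of s m' is a constant function times σ
    have hconst : ∀ x : ρ.asModule, ∀ k : G, (s m' x).coeff k = (s m' x).coeff 1 := by
      intro x k
      have := congrArg (fun f => (f x : MonoidAlgebra R G).coeff k) (hsm k)
      simp only [Finsupp.smul_apply, smul_eq_mul] at this
      -- (single k 1 * s m' x) k = s m' x k
      rw [MonoidAlgebra.single_mul_apply, inv_mul_cancel, one_mul] at this
      exact this.symm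
    have hcoef : ∀ x : ρ.asModule,
        (s m' x : MonoidAlgebra R G) = σ * MonoidAlgebra.single 1 ((s m' x).coeff 1) := by
      intro x
      apply MonoidAlgebra.coeff_injective
      ext k
      rw [hσ, Finset.sum_mul]
      simp only [MonoidAlgebra.single_mul_single, one_mul, mul_one]
      rw [MonoidAlgebra.coeff_sum, Finset.sum_apply']
      simp only [MonoidAlgebra.coeff_single, Finsupp.single_apply]
      rw [Finset.sum_eq_single k]
      · simp [hconst x k]
      · intro b _ hb; simp [hb]
      · simp
    -- now write m = σ • n
    set n : ρ.asModule :=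
      (s m').sum fun x c => (MonoidAlgebra.single (1:G) ((c : MonoidAlgebra R G).coeff (1:G))) • x with hn
    have hσn : σ • n = m' := by
      conv_rhs => rw [← hs m']
      rw [Finsupp.linearCombination_apply, hn, Finsupp.smul_sum, Finsupp.sum, Finsupp.sum]
      apply Finset.sum_congr rfl
      intro x hx
      rw [smul_smul, ← hcoef x]
      rfl
    -- σ • n = ∑ g, ρ g n
    have hσsum : σ • n = (∑ g : G, ρ g (ρ.asModuleEquiv n) : M) := by
      rw [hσ, Finset.sum_smul]
      show (∑ g : G, (MonoidAlgebra.single g (1:R)) • n : ρ.asModule) = _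
      have : ∀ g : G, (MonoidAlgebra.single g (1:R)) • n
          = (ρ g (ρ.asModuleEquiv n) : ρ.asModule) := fun g => single_smul_asModule ρ g n
      simp_rw [this]
      rfl
    exact ⟨ρ.asModuleEquiv n, by rw [← hσsum, hσn]⟩
  · rintro ⟨x, rfl⟩
    intro g
    rw [map_sum]
    have : ∀ h : G, ρ g (ρ h x) = ρ (g * h) x := by
      intro h
      rw [map_mul]
      rfl
    simp_rw [this]
    exact Fintype.sum_equiv (Equiv.mulLeft g) _ _ (fun h => rfl)
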